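/- Let G be a topological space, H ⊆ G a subset, and (u_n)_{n ∈ ℕ} a sequence of continuous functions u_n : G → ℂ such that |u_n(t)| ≤ 1 for all t ∈ G, u_n(h) = 1 for all h ∈ H, and for every s ∈ G \ H there exists n with u_n(s) ≠ 1. Then u(t) = ∑_{n ∈ ℕ} 2^{-(n+1)} · u_n(t) defines a continuous function u : G → ℂ with |u(t)| ≤ 1 for all t ∈ G and {t ∈ G : u(t) = 1} = H. -/

import Mathlib

lemma re_lt_one_of_ne_one {z : ℂ} (h : ‖z‖ ≤ 1) (hz : z ≠ 1) : z.re < 1 := by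
  have hre : z.re ≤ 1 := (Complex.re_le_norm z).trans h
  rcases lt_or_eq_of_le hre with h1 | h1
  · exact h1
  · exfalso
    have habs : ‖z‖ ≤ 1 := h
    have hns : Complex.normSq z ≤ 1 := by
      have := Complex.sq_norm z
      nlinarith [norm_nonneg z]
    have him : z.im = 0 := by
      have := Complex.normSq_apply z
      nlinarith [sq_nonneg z.im]
    exact hz (Complex.ext h1 (by simp [him]))

lemma half_pow_tsum : ∑' n : ℕ, (1 / 2 : ℂ) ^ (n + 1) = 1 := by
  have hnorm : ‖(1 / 2 : ℂ)‖ < 1 := by norm_num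
  have hg := tsum_geometric_of_norm_lt_one hnorm
  calc ∑' n : ℕ, (1 / 2 : ℂ) ^ (n + 1)
      = ∑' n : ℕ, (1 / 2 : ℂ) * (1 / 2) ^ n := by
        congr 1; funext n; ring
    _ = (1 / 2 : ℂ) * ∑' n : ℕ, (1 / 2 : ℂ) ^ n := tsum_mul_left
    _ = 1 := by rw [hg]; norm_num

/-- Given continuous functions `u n : G → ℂ` with `|u n| ≤ 1`, each equal to `1` on `H`,
and such that every point outside `H` is separated by some `u n` (i.e. `u n s ≠ 1`), the
function `u t = ∑' n, 2^{-(n+1)} * u n t` is continuous, satisfies `|u| ≤ 1`, and its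
level set `{t : u t = 1}` is exactly `H`. -/
theorem series_of_separating_functions
    {G : Type*} [TopologicalSpace G] (H : Set G)
    (u : ℕ → G → ℂ)
    (hc : ∀ n : ℕ, Continuous (u n))
    (hb : ∀ (n : ℕ) (t : G), ‖u n t‖ ≤ 1)
    (hone : ∀ (n : ℕ), ∀ h ∈ H, u n h = 1)
    (hsep : ∀ s ∉ H, ∃ n : ℕ, u n s ≠ 1) :
    Continuous (fun t : G => ∑' n : ℕ, (1 / 2 : ℂ) ^ (n + 1) * u n t) ∧
      (∀ t : G, ‖∑' n : ℕ, (1 / 2 : ℂ) ^ (n + 1) * u n t‖ ≤ 1) ∧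
      {t : G | (∑' n : ℕ, (1 / 2 : ℂ) ^ (n + 1) * u n t) = 1} = H := by
  have hbound : ∀ (n : ℕ) (t : G), ‖(1 / 2 : ℂ) ^ (n + 1) * u n t‖ ≤ (1 / 2 : ℝ) ^ (n + 1) := by
    intro n t
    rw [norm_mul, norm_pow]
    have h2 : ‖(1 / 2 : ℂ)‖ = (1 / 2 : ℝ) := by norm_num
    rw [h2]
    have := mul_le_mul_of_nonneg_left (hb n t) (by positivity : (0:ℝ) ≤ (1/2:ℝ)^(n+1))
    simpa using this
  have hSgeo : Summable fun n : ℕ => (1 / 2 : ℝ) ^ (n + 1) := by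
    apply Summable.comp_injective (summable_geometric_of_lt_one (by norm_num) (by norm_num))
      (add_left_injective 1)
  have hsum : ∀ t : G, Summable fun n : ℕ => (1 / 2 : ℂ) ^ (n + 1) * u n t := by
    intro t
    exact Summable.of_norm_bounded hSgeo (fun n => hbound n t)
  have hgeo_sum : ∑' n : ℕ, (1 / 2 : ℝ) ^ (n + 1) = 1 := by
    have hg := tsum_geometric_of_lt_one (by norm_num : (0:ℝ) ≤ 1/2) (by norm_num : (1/2:ℝ) < 1)
    calc ∑' n : ℕ, (1 / 2 : ℝ) ^ (n + 1)
        = ∑' n : ℕ, (1 / 2 : ℝ) * (1 / 2) ^ n := by congr 1; funext n; ring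
      _ = (1 / 2 : ℝ) * ∑' n : ℕ, (1 / 2 : ℝ) ^ n := tsum_mul_left
      _ = 1 := by rw [hg]; norm_num
  refine ⟨?_, ?_, ?_⟩
  · exact continuous_tsum (fun n => (continuous_const.mul (hc n))) hSgeo
      (fun n t => hbound n t)
  · intro t
    calc ‖∑' n : ℕ, (1 / 2 : ℂ) ^ (n + 1) * u n t‖
        ≤ ∑' n : ℕ, (1 / 2 : ℝ) ^ (n + 1) :=
          tsum_of_norm_bounded hSgeo.hasSum (fun n => hbound n t)
      _ = 1 := hgeo_sum
  · ext t
    simp only [Set.mem_setOf_eq]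
    constructor
    · intro ht
      by_contra htH
      obtain ⟨m, hm⟩ := hsep t htH
      have hreal : ∀ n : ℕ, ((1 / 2 : ℂ) ^ (n + 1) * u n t).re
          = (1 / 2 : ℝ) ^ (n + 1) * (u n t).re := by
        intro n
        have hcast : ((1 / 2 : ℂ)) ^ (n + 1) = (((1 / 2 : ℝ) ^ (n + 1) : ℝ) : ℂ) := by
          push_cast; ring
        rw [hcast, Complex.mul_re, Complex.ofReal_re, Complex.ofReal_im]
        ring
      have hre := Complex.re_tsum (hsum t)
      rw [ht] at hre
      have hre' : ∑' n : ℕ, (1 / 2 : ℝ) ^ (n + 1) * (u n t).re = 1 := by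
        rw [← tsum_congr hreal, ← hre, Complex.one_re]
      have h1 : Summable fun n : ℕ => ((1 / 2 : ℂ) ^ (n + 1) * u n t).re :=
        (Complex.hasSum_re (hsum t).hasSum).summable
      have hsumre : Summable fun n : ℕ => (1 / 2 : ℝ) ^ (n + 1) * (u n t).re :=
        (summable_congr hreal).mp h1
      have hle : ∀ n : ℕ, (1 / 2 : ℝ) ^ (n + 1) * (u n t).re ≤ (1 / 2 : ℝ) ^ (n + 1) := by
        intro n
        have hr : (u n t).re ≤ 1 :=
          (Complex.re_le_norm _).trans (hb n t)
        have := mul_le_mul_of_nonneg_left hr (by positivity : (0:ℝ) ≤ (1/2:ℝ)^(n+1))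
        simpa using this
      have hltm : (1 / 2 : ℝ) ^ (m + 1) * (u m t).re < (1 / 2 : ℝ) ^ (m + 1) := by
        have hr := re_lt_one_of_ne_one (hb m t) hm
        have := mul_lt_mul_of_pos_left hr (by positivity : (0:ℝ) < (1/2:ℝ)^(m+1))
        simpa using this
      have hlt : ∑' n : ℕ, (1 / 2 : ℝ) ^ (n + 1) * (u n t).re
          < ∑' n : ℕ, (1 / 2 : ℝ) ^ (n + 1) :=
        Summable.tsum_lt_tsum hle hltm hsumre hSgeo
      rw [hre', hgeo_sum] at hlt
      exact lt_irrefl _ hlt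
    · intro ht
      have heq : ∀ n : ℕ, (1 / 2 : ℂ) ^ (n + 1) * u n t = (1 / 2 : ℂ) ^ (n + 1) := by
        intro n; rw [hone n t ht, mul_one]
      rw [tsum_congr heq, half_pow_tsum]
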